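/- Let n ≥ 2 and let f be a fixed-point-free involution on ZMod (2n). For any two chords c = {a, f a} and d = {b, f b} with disjoint endpoint sets, exactly one of b, f b lies in the open arc from a to f a if and only if exactly one of a, f a lies in the open arc from b to f b. In other words, the linking relation on chords of a chord diagram is symmetric. -/

import Mathlib

/-- The open arc from `u` to `v` on the cyclic set `ZMod N`: the points
`u+1, u+2, …, v-1` reached from `u` by repeatedly adding `1` before reaching `v`. -/
def openArc {N : ℕ} (u v : ZMod N) : Set (ZMod N) :=
  {w | 0 < (w - u).val ∧ (w - u).val < (v - u).val}

/-- For a chord diagram given by the fixed-point-free involution `f`, the chord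
`{b, f b}` is linked with the chord `{a, f a}` if exactly one of `b`, `f b`
lies in the open arc from `a` to `f a`. -/
def Linked {N : ℕ} (f : ZMod N → ZMod N) (a b : ZMod N) : Prop :=
  Xor' (b ∈ openArc a (f a)) (f b ∈ openArc a (f a))

private lemma sub_val_cases {N : ℕ} [NeZero N] (x y : ZMod N) :
    (x - y).val + y.val = x.val ∨ (x - y).val + y.val = x.val + N := by
  have h := ZMod.val_add (x - y) y
  rw [sub_add_cancel] at h
  have h1 := ZMod.val_lt (x - y)
  have h2 := ZMod.val_lt y
  rcases Nat.lt_or_ge ((x - y).val + y.val) N with hlt | hge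
  · left; rw [h, Nat.mod_eq_of_lt hlt]
  · right
    rw [h, Nat.mod_eq_sub_mod hge, Nat.mod_eq_of_lt (by omega)]
    omega

/-- For any two chords `c = {a, f a}` and `d = {b, f b}` of a chord diagram with
disjoint endpoint sets, `d` is linked with `c` if and only if `c` is linked with `d`:
the linking relation on chords is symmetric. -/
theorem linking_symmetric (n : ℕ) (hn : 2 ≤ n)
    (f : ZMod (2 * n) → ZMod (2 * n))
    (hinv : Function.Involutive f) (hfpf : ∀ x, f x ≠ x)
    (a b : ZMod (2 * n))
    (hdisj : Disjoint ({a, f a} : Set (ZMod (2 * n))) ({b, f b} : Set (ZMod (2 * n)))) :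
    Linked f a b ↔ Linked f b a := by
  haveI : NeZero (2 * n) := ⟨by omega⟩
  have hab : a ≠ b := fun h =>
    Set.disjoint_left.mp hdisj (show a ∈ ({a, f a} : Set _) by simp)
      (show a ∈ ({b, f b} : Set _) by simp [h])
  have haB : a ≠ f b := fun h =>
    Set.disjoint_left.mp hdisj (show a ∈ ({a, f a} : Set _) by simp)
      (show a ∈ ({b, f b} : Set _) by simp [h])
  have hAb : f a ≠ b := fun h =>
    Set.disjoint_left.mp hdisj (show f a ∈ ({a, f a} : Set _) by simp)
      (show f a ∈ ({b, f b} : Set _) by simp [h])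
  have hAB : f a ≠ f b := fun h =>
    Set.disjoint_left.mp hdisj (show f a ∈ ({a, f a} : Set _) by simp)
      (show f a ∈ ({b, f b} : Set _) by simp [h])
  have haA : a ≠ f a := fun h => hfpf a h.symm
  have hbB : b ≠ f b := fun h => hfpf b h.symm
  have vinj : ∀ x y : ZMod (2 * n), x ≠ y → x.val ≠ y.val := by
    intro x y hxy h
    exact hxy (ZMod.val_injective _ h)
  have e1 := vinj _ _ hab
  have e2 := vinj _ _ haB
  have e3 := vinj _ _ hAb
  have e4 := vinj _ _ hAB
  have e5 := vinj _ _ haA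
  have e6 := vinj _ _ hbB
  have d1 := sub_val_cases b a
  have d2 := sub_val_cases (f b) a
  have d3 := sub_val_cases (f a) a
  have d4 := sub_val_cases a b
  have d5 := sub_val_cases (f a) b
  have d6 := sub_val_cases (f b) b
  have l1 := ZMod.val_lt (b - a)
  have l2 := ZMod.val_lt (f b - a)
  have l3 := ZMod.val_lt (f a - a)
  have l4 := ZMod.val_lt (a - b)
  have l5 := ZMod.val_lt (f a - b)
  have l6 := ZMod.val_lt (f b - b)
  have m1 := ZMod.val_lt a
  have m2 := ZMod.val_lt b
  have m3 := ZMod.val_lt (f a)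
  have m4 := ZMod.val_lt (f b)
  unfold Linked openArc Xor'
  simp only [Set.mem_setOf_eq, Xor]
  omega
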